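/- arXiv:2307.08330 — 3 statements merged into one kernel-verified Lean document; each statement's English description precedes it below -/
import Mathlib

section
/- Fix d ≥ 3. Represent bipartite vectors in ℂ^d ⊗ ℂ^d as d×d complex matrices, with ⟨ψ|(I ⊗ E)|φ⟩ = tr(Ψᴴ Φ Eᵀ) for a d×d matrix E. Let Φ₀ be the matrix of |00⟩ − |12⟩, let Φᵢ (1 ≤ i ≤ d−1) be the matrix of |i0⟩ − |0i⟩, and let Σ be the all-ones matrix. If a d×d complex matrix E satisfies tr(Ψᴴ Φ Eᵀ) = 0 for every pair of distinct states Ψ ≠ Φ from the set {Φ₀, Φ₁, …, Φ_{d−1}, Σ}, then E = c·I for some c ∈ ℂ. -/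
open Matrix

/-- Coefficient matrix of the basis vector `|i⟩⊗|j⟩` in `ℂ^{d₁} ⊗ ℂ^{d₂}`. -/
noncomputable def ket (d₁ d₂ : ℕ) (i j : ℕ) : Matrix (Fin d₁) (Fin d₂) ℂ :=
  fun a b => if (a : ℕ) = i ∧ (b : ℕ) = j then 1 else 0

/-- The `d+1` states of Theorem 1 in `ℂ^d ⊗ ℂ^d`: index `0` is `|00⟩ − |12⟩`,
index `i` with `1 ≤ i ≤ d−1` is `|i0⟩ − |0i⟩`, and index `d` is the stopper
state (all-ones coefficient matrix). -/
noncomputable def stateDD (d : ℕ) (i : ℕ) : Matrix (Fin d) (Fin d) ℂ :=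
  if i = 0 then ket d d 0 0 - ket d d 1 2
  else if i < d then ket d d i 0 - ket d d 0 i
  else fun _ _ => 1

lemma ket_eq_std (d : ℕ) (a b : ℕ) (ha : a < d) (hb : b < d) :
    ket d d a b = Matrix.single (⟨a, ha⟩ : Fin d) (⟨b, hb⟩ : Fin d) 1 := by
  ext p q
  simp [ket, Matrix.single, Fin.ext_iff, eq_comm]

lemma std_conjT (d : ℕ) (a b : Fin d) :
    (Matrix.single a b (1:ℂ))ᴴ = Matrix.single b a 1 := by
  ext p q
  simp [Matrix.single, conjTranspose_apply, and_comm]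

lemma trace_std_mul (d : ℕ) (N : Matrix (Fin d) (Fin d) ℂ) (i j : Fin d) :
    trace (Matrix.single i j (1:ℂ) * N) = N j i := by
  rw [Matrix.trace]
  rw [Finset.sum_eq_single i]
  · simp
  · intro p _ hp; exact Matrix.single_mul_apply_of_ne 1 i j p p hp N
  · simp

lemma tr_kk (d : ℕ) (E : Matrix (Fin d) (Fin d) ℂ) (a b c e : ℕ)
    (ha : a < d) (hb : b < d) (hc : c < d) (he : e < d) :
    trace ((ket d d a b)ᴴ * (ket d d c e * Eᵀ)) =
      if a = c then E ⟨b, hb⟩ ⟨e, he⟩ else 0 := by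
  rw [ket_eq_std d a b ha hb, ket_eq_std d c e hc he, std_conjT, trace_std_mul]
  by_cases h : a = c
  · subst h
    rw [if_pos rfl]
    rw [show (⟨a, ha⟩ : Fin d) = ⟨a, hc⟩ from rfl]  -- proof irrelevance
    rw [Matrix.single_mul_apply_same]
    simp
  · rw [if_neg h]
    exact Matrix.single_mul_apply_of_ne _ _ _ _ _ (Fin.ne_of_val_ne h) _

lemma tr_ko (d : ℕ) (E J : Matrix (Fin d) (Fin d) ℂ) (hJ : ∀ p q, J p q = 1)
    (a b : ℕ) (ha : a < d) (hb : b < d) :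
    trace ((ket d d a b)ᴴ * (J * Eᵀ)) = ∑ m, E ⟨b, hb⟩ m := by
  rw [ket_eq_std d a b ha hb, std_conjT, trace_std_mul]
  simp [Matrix.mul_apply, Matrix.transpose_apply, hJ]

lemma tr_ok (d : ℕ) (E J : Matrix (Fin d) (Fin d) ℂ) (hJ : ∀ p q, J p q = 1)
    (c e : ℕ) (hc : c < d) (he : e < d) :
    trace (Jᴴ * (ket d d c e * Eᵀ)) = ∑ k, E k ⟨e, he⟩ := by
  rw [ket_eq_std d c e hc he, Matrix.trace]
  simp [Matrix.diag, Matrix.mul_apply, Matrix.conjTranspose_apply, Matrix.single,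
    Matrix.transpose_apply, ite_and, boole_mul, hJ]

lemma stateDD_zero (d : ℕ) : stateDD d 0 = ket d d 0 0 - ket d d 1 2 := by
  rw [stateDD, if_pos rfl]

lemma stateDD_mid (d i : ℕ) (h0 : i ≠ 0) (hid : i < d) :
    stateDD d i = ket d d i 0 - ket d d 0 i := by
  rw [stateDD, if_neg h0]; exact if_pos hid

lemma stateDD_top (d : ℕ) (hd : d ≠ 0) (p q : Fin d) : stateDD d d p q = 1 := by
  rw [stateDD, if_neg hd]
  split_ifs with h
  · exact absurd h (lt_irrefl d)
  · simp [h]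

lemma tr_expand (d : ℕ) (A B C D E : Matrix (Fin d) (Fin d) ℂ) :
    trace ((A - B)ᴴ * ((C - D) * Eᵀ)) =
      trace (Aᴴ * (C * Eᵀ)) - trace (Aᴴ * (D * Eᵀ))
        - trace (Bᴴ * (C * Eᵀ)) + trace (Bᴴ * (D * Eᵀ)) := by
  simp only [conjTranspose_sub, Matrix.sub_mul, Matrix.mul_sub, trace_sub]
  ring

lemma tr_expand_left (d : ℕ) (A B J E : Matrix (Fin d) (Fin d) ℂ) :
    trace ((A - B)ᴴ * (J * Eᵀ)) = trace (Aᴴ * (J * Eᵀ)) - trace (Bᴴ * (J * Eᵀ)) := by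
  simp only [conjTranspose_sub, Matrix.sub_mul, trace_sub]

lemma tr_expand_right (d : ℕ) (J C D E : Matrix (Fin d) (Fin d) ℂ) :
    trace (Jᴴ * ((C - D) * Eᵀ)) = trace (Jᴴ * (C * Eᵀ)) - trace (Jᴴ * (D * Eᵀ)) := by
  simp only [Matrix.sub_mul, Matrix.mul_sub, trace_sub]

theorem bob_trivial_dd (d : ℕ) (hd : 3 ≤ d) (E : Matrix (Fin d) (Fin d) ℂ)
    (hE : ∀ i j : ℕ, i ≤ d → j ≤ d → i ≠ j →
      Matrix.trace ((stateDD d i)ᴴ * (stateDD d j * Eᵀ)) = 0) :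
    ∃ c : ℂ, E = c • (1 : Matrix (Fin d) (Fin d) ℂ) := by
  have h0 : (0:ℕ) < d := by omega
  have h1 : (1:ℕ) < d := by omega
  have h2 : (2:ℕ) < d := by omega
  -- off-diagonal in the [1,d) block
  have offAA : ∀ (i j : ℕ) (hi : i < d) (hj : j < d), 1 ≤ i → 1 ≤ j → i ≠ j →
      E ⟨i, hi⟩ ⟨j, hj⟩ = 0 := by
    intro i j hi hj hi1 hj1 hij
    have h := hE i j (le_of_lt hi) (le_of_lt hj) hij
    rw [stateDD_mid d i (by omega) hi, stateDD_mid d j (by omega) hj, tr_expand,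
      tr_kk d E i 0 j 0 hi h0 hj h0, tr_kk d E i 0 0 j hi h0 h0 hj,
      tr_kk d E 0 i j 0 h0 hi hj h0, tr_kk d E 0 i 0 j h0 hi h0 hj,
      if_neg hij, if_neg (by omega : i ≠ 0), if_neg (by omega : (0:ℕ) ≠ j),
      if_pos rfl] at h
    linear_combination h
  -- row 0
  have row0 : ∀ (j : ℕ) (hj : j < d), 1 ≤ j →
      E ⟨0, h0⟩ ⟨j, hj⟩ + (if 1 = j then E ⟨2, h2⟩ ⟨0, h0⟩ else 0) = 0 := by
    intro j hj hj1
    have h := hE 0 j (by omega) (le_of_lt hj) (by omega)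
    rw [stateDD_zero, stateDD_mid d j (by omega) hj, tr_expand,
      tr_kk d E 0 0 j 0 h0 h0 hj h0, tr_kk d E 0 0 0 j h0 h0 h0 hj,
      tr_kk d E 1 2 j 0 h1 h2 hj h0, tr_kk d E 1 2 0 j h1 h2 h0 hj,
      if_neg (by omega : (0:ℕ) ≠ j), if_pos rfl, if_neg (by omega : (1:ℕ) ≠ 0)] at h
    linear_combination -h
  -- column 0
  have col0 : ∀ (i : ℕ) (hi : i < d), 1 ≤ i →
      E ⟨i, hi⟩ ⟨0, h0⟩ + (if i = 1 then E ⟨0, h0⟩ ⟨2, h2⟩ else 0) = 0 := by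
    intro i hi hi1
    have h := hE i 0 (le_of_lt hi) (by omega) (by omega)
    rw [stateDD_mid d i (by omega) hi, stateDD_zero, tr_expand,
      tr_kk d E i 0 0 0 hi h0 h0 h0, tr_kk d E i 0 1 2 hi h0 h1 h2,
      tr_kk d E 0 i 0 0 h0 hi h0 h0, tr_kk d E 0 i 1 2 h0 hi h1 h2,
      if_neg (by omega : i ≠ 0), if_pos rfl, if_neg (by omega : (0:ℕ) ≠ 1)] at h
    linear_combination -h
  -- column sums from the stopper state
  have colsum : ∀ (j : ℕ) (hj : j < d), 1 ≤ j →
      (∑ k, E k ⟨0, h0⟩) = ∑ k, E k ⟨j, hj⟩ := by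
    intro j hj hj1
    have h := hE d j (le_refl d) (le_of_lt hj) (by omega)
    rw [stateDD_mid d j (by omega) hj, tr_expand_right,
      tr_ok d E (stateDD d d) (stateDD_top d (by omega)) j 0 hj h0,
      tr_ok d E (stateDD d d) (stateDD_top d (by omega)) 0 j h0 hj] at h
    linear_combination h
  -- all off-diagonal entries vanish
  have off : ∀ i j : Fin d, i ≠ j → E i j = 0 := by
    have e20 : E ⟨2, h2⟩ ⟨0, h0⟩ = 0 := by
      have := col0 2 h2 (by omega)
      rw [if_neg (by omega : (2:ℕ) ≠ 1), add_zero] at this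
      exact this
    have e02 : E ⟨0, h0⟩ ⟨2, h2⟩ = 0 := by
      have := row0 2 h2 (by omega)
      rw [if_neg (by omega : (1:ℕ) ≠ 2), add_zero] at this
      exact this
    intro i j hij
    have hvij : (i : ℕ) ≠ (j : ℕ) := fun h => hij (Fin.ext h)
    by_cases hi0 : (i : ℕ) = 0
    · -- row 0 case
      by_cases hj1 : (j : ℕ) = 1
      · have := row0 (j : ℕ) j.isLt (by omega)
        rw [if_pos hj1.symm, e20, add_zero] at this
        have hi : i = ⟨0, h0⟩ := Fin.ext hi0
        rw [hi]
        simpa using this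
      · have := row0 (j : ℕ) j.isLt (by omega)
        rw [if_neg (by omega : (1:ℕ) ≠ (j:ℕ)), add_zero] at this
        have hi : i = ⟨0, h0⟩ := Fin.ext hi0
        rw [hi]
        simpa using this
    · by_cases hj0 : (j : ℕ) = 0
      · -- column 0 case
        have hj : j = ⟨0, h0⟩ := Fin.ext hj0
        by_cases hi1 : (i : ℕ) = 1
        · have := col0 (i : ℕ) i.isLt (by omega)
          rw [if_pos hi1, e02, add_zero] at this
          rw [hj]
          simpa using this
        · have := col0 (i : ℕ) i.isLt (by omega)
          rw [if_neg hi1, add_zero] at this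
          rw [hj]
          simpa using this
      · have := offAA (i : ℕ) (j : ℕ) i.isLt j.isLt (by omega) (by omega) hvij
        simpa using this
  -- diagonal entries all equal E 0 0
  have diag : ∀ i : Fin d, E i i = E ⟨0, h0⟩ ⟨0, h0⟩ := by
    have sumdiag : ∀ a : Fin d, (∑ k, E k a) = E a a := by
      intro a
      rw [Finset.sum_eq_single a]
      · intro k _ hk; exact off k a hk
      · simp
    intro i
    by_cases hi0 : (i : ℕ) = 0
    · have hi : i = ⟨0, h0⟩ := Fin.ext hi0
      rw [hi]
    · have := colsum (i : ℕ) i.isLt (by omega)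
      rw [sumdiag, sumdiag] at this
      simpa using this.symm
  refine ⟨E ⟨0, h0⟩ ⟨0, h0⟩, ?_⟩
  ext i j
  by_cases hij : i = j
  · subst hij
    rw [diag i]
    simp [Matrix.one_apply]
  · rw [off i j hij]
    simp [Matrix.one_apply, hij]
end

section
/- Let 3 ≤ d₁ ≤ d₂ ≤ d₃ and ω = e^{2πi/3}. Let S ⊂ ℂ^{d₁} ⊗ ℂ^{d₂} ⊗ ℂ^{d₃} consist of |000⟩ − |111⟩; |i00⟩ + ω|0i0⟩ + ω²|00i⟩ for 1 ≤ i ≤ d₁−1; |0j0⟩ − |00j⟩ for d₁ ≤ j ≤ d₂−1; |00k⟩ − |2,1,(k−1)⟩ for d₂ ≤ k ≤ d₃−1; and the stopper (∑_{a<d₁}|a⟩)⊗(∑_{b<d₂}|b⟩)⊗(∑_{c<d₃}|c⟩). If a d₃×d₃ complex matrix E satisfies ⟨ψ| (I ⊗ I ⊗ E) |φ⟩ = 0 for all distinct ψ, φ ∈ S, then E = c·I for some c ∈ ℂ. -/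
open Finset

/-- Coefficient function of the basis vector `|a⟩⊗|b⟩⊗|c⟩` in
`ℂ^{d₁} ⊗ ℂ^{d₂} ⊗ ℂ^{d₃}`. -/
noncomputable def ket3 (d₁ d₂ d₃ : ℕ) (a b c : ℕ) : Fin d₁ → Fin d₂ → Fin d₃ → ℂ :=
  fun x y z => if (x : ℕ) = a ∧ (y : ℕ) = b ∧ (z : ℕ) = c then 1 else 0

/-- The `d₃+1` states of Theorem 4 (Eq. (7)) in `ℂ^{d₁} ⊗ ℂ^{d₂} ⊗ ℂ^{d₃}`,
with `ω = exp(2πi/3)`: index `0` is `|000⟩ − |111⟩`; `1 ≤ i ≤ d₁−1` gives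
`|i00⟩ + ω|0i0⟩ + ω²|00i⟩`; `d₁ ≤ j ≤ d₂−1` gives `|0j0⟩ − |00j⟩`;
`d₂ ≤ k ≤ d₃−1` gives `|00k⟩ − |2,1,(k−1)⟩`; index `d₃` is the stopper. -/
noncomputable def stateT (d₁ d₂ d₃ : ℕ) (i : ℕ) : Fin d₁ → Fin d₂ → Fin d₃ → ℂ :=
  if i = 0 then ket3 d₁ d₂ d₃ 0 0 0 - ket3 d₁ d₂ d₃ 1 1 1
  else if i < d₁ then
    ket3 d₁ d₂ d₃ i 0 0 + (Complex.exp (2 * Real.pi * Complex.I / 3)) • ket3 d₁ d₂ d₃ 0 i 0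
      + (Complex.exp (2 * Real.pi * Complex.I / 3)) ^ 2 • ket3 d₁ d₂ d₃ 0 0 i
  else if i < d₂ then ket3 d₁ d₂ d₃ 0 i 0 - ket3 d₁ d₂ d₃ 0 0 i
  else if i < d₃ then ket3 d₁ d₂ d₃ 0 0 i - ket3 d₁ d₂ d₃ 2 1 (i - 1)
  else fun _ _ _ => 1

/-- The sesquilinear pairing `⟨ψ| (I⊗I⊗E) |φ⟩`. -/
noncomputable def pr3 (d₁ d₂ d₃ : ℕ) (E : Matrix (Fin d₃) (Fin d₃) ℂ)
    (ψ φ : Fin d₁ → Fin d₂ → Fin d₃ → ℂ) : ℂ :=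
  ∑ a : Fin d₁, ∑ b : Fin d₂, ∑ c : Fin d₃,
    (starRingEnd ℂ) (ψ a b c) * (∑ c' : Fin d₃, E c c' * φ a b c')

/-- The matrix `E` extended to `ℕ × ℕ` by zero. -/
noncomputable def ext3 {d₃ : ℕ} (E : Matrix (Fin d₃) (Fin d₃) ℂ) (m n : ℕ) : ℂ :=
  if h : m < d₃ ∧ n < d₃ then E ⟨m, h.1⟩ ⟨n, h.2⟩ else 0

/-- Column sums of the extended matrix. -/
noncomputable def colS {d₃ : ℕ} (E : Matrix (Fin d₃) (Fin d₃) ℂ) (n : ℕ) : ℂ :=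
  ∑ c : Fin d₃, ext3 E (c : ℕ) n

lemma sum_delta {d : ℕ} (n : ℕ) (f : Fin d → ℂ) :
    (∑ x : Fin d, if (x : ℕ) = n then f x else 0) = if h : n < d then f ⟨n, h⟩ else 0 := by
  split_ifs with h
  · rw [Finset.sum_eq_single (⟨n, h⟩ : Fin d)]
    · simp
    · intro b _ hb; exact if_neg fun hc => hb (Fin.ext hc)
    · intro hmem; exact absurd (Finset.mem_univ _) hmem
  · exact Finset.sum_eq_zero fun x _ => if_neg fun hc => h (by rw [← hc]; exact x.isLt)

lemma pr3_expand (d₁ d₂ d₃ : ℕ) (E : Matrix (Fin d₃) (Fin d₃) ℂ)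
    (ψ φ : Fin d₁ → Fin d₂ → Fin d₃ → ℂ) :
    pr3 d₁ d₂ d₃ E ψ φ = ∑ a : Fin d₁, ∑ b : Fin d₂, ∑ c : Fin d₃, ∑ c' : Fin d₃,
      (starRingEnd ℂ) (ψ a b c) * (E c c' * φ a b c') := by
  simp [pr3, Finset.mul_sum]

lemma pr3_add_right (d₁ d₂ d₃ : ℕ) (E : Matrix (Fin d₃) (Fin d₃) ℂ) (ψ φ₁ φ₂) :
    pr3 d₁ d₂ d₃ E ψ (φ₁ + φ₂) = pr3 d₁ d₂ d₃ E ψ φ₁ + pr3 d₁ d₂ d₃ E ψ φ₂ := by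
  simp [pr3_expand, mul_add, Finset.sum_add_distrib]

lemma pr3_sub_right (d₁ d₂ d₃ : ℕ) (E : Matrix (Fin d₃) (Fin d₃) ℂ) (ψ φ₁ φ₂) :
    pr3 d₁ d₂ d₃ E ψ (φ₁ - φ₂) = pr3 d₁ d₂ d₃ E ψ φ₁ - pr3 d₁ d₂ d₃ E ψ φ₂ := by
  simp [pr3_expand, mul_sub, Finset.sum_sub_distrib]

lemma pr3_smul_right (d₁ d₂ d₃ : ℕ) (E : Matrix (Fin d₃) (Fin d₃) ℂ) (r : ℂ) (ψ φ) :
    pr3 d₁ d₂ d₃ E ψ (r • φ) = r * pr3 d₁ d₂ d₃ E ψ φ := by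
  simp only [pr3_expand, Pi.smul_apply, smul_eq_mul, Finset.mul_sum]
  refine Finset.sum_congr rfl fun a _ => Finset.sum_congr rfl fun b _ =>
    Finset.sum_congr rfl fun c _ => Finset.sum_congr rfl fun c' _ => by ring

lemma pr3_add_left (d₁ d₂ d₃ : ℕ) (E : Matrix (Fin d₃) (Fin d₃) ℂ) (ψ₁ ψ₂ φ) :
    pr3 d₁ d₂ d₃ E (ψ₁ + ψ₂) φ = pr3 d₁ d₂ d₃ E ψ₁ φ + pr3 d₁ d₂ d₃ E ψ₂ φ := by
  simp [pr3_expand, add_mul, Finset.sum_add_distrib]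

lemma pr3_sub_left (d₁ d₂ d₃ : ℕ) (E : Matrix (Fin d₃) (Fin d₃) ℂ) (ψ₁ ψ₂ φ) :
    pr3 d₁ d₂ d₃ E (ψ₁ - ψ₂) φ = pr3 d₁ d₂ d₃ E ψ₁ φ - pr3 d₁ d₂ d₃ E ψ₂ φ := by
  simp [pr3_expand, sub_mul, Finset.sum_sub_distrib]

lemma pr3_smul_left (d₁ d₂ d₃ : ℕ) (E : Matrix (Fin d₃) (Fin d₃) ℂ) (r : ℂ) (ψ φ) :
    pr3 d₁ d₂ d₃ E (r • ψ) φ = (starRingEnd ℂ) r * pr3 d₁ d₂ d₃ E ψ φ := by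
  simp only [pr3_expand, Pi.smul_apply, smul_eq_mul, map_mul, Finset.mul_sum]
  refine Finset.sum_congr rfl fun a _ => Finset.sum_congr rfl fun b _ =>
    Finset.sum_congr rfl fun c _ => Finset.sum_congr rfl fun c' _ => by ring

lemma pr3_ket_ket (d₁ d₂ d₃ : ℕ) (E : Matrix (Fin d₃) (Fin d₃) ℂ) (a₀ b₀ c₀ a₁ b₁ c₁ : ℕ) :
    pr3 d₁ d₂ d₃ E (ket3 d₁ d₂ d₃ a₀ b₀ c₀) (ket3 d₁ d₂ d₃ a₁ b₁ c₁)
      = if a₀ = a₁ ∧ b₀ = b₁ ∧ a₀ < d₁ ∧ b₀ < d₂ then ext3 E c₀ c₁ else 0 := by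
  unfold pr3 ket3
  have key : ∀ (a : Fin d₁) (b : Fin d₂),
      (∑ c : Fin d₃,
        (starRingEnd ℂ) (if (a : ℕ) = a₀ ∧ (b : ℕ) = b₀ ∧ (c : ℕ) = c₀ then (1:ℂ) else 0) *
        (∑ c' : Fin d₃, E c c' *
          (if (a : ℕ) = a₁ ∧ (b : ℕ) = b₁ ∧ (c' : ℕ) = c₁ then (1:ℂ) else 0)))
      = if (a : ℕ) = a₀ then (if (b : ℕ) = b₀ then (if (a : ℕ) = a₁ then (if (b : ℕ) = b₁ then
          (if h : c₀ < d₃ then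
            (if h' : c₁ < d₃ then E ⟨c₀, h⟩ ⟨c₁, h'⟩ else 0) else 0)
          else 0) else 0) else 0) else 0 := by
    intro a b
    by_cases h1 : (a : ℕ) = a₀ <;> by_cases h2 : (b : ℕ) = b₀ <;>
      by_cases h3 : (a : ℕ) = a₁ <;> by_cases h4 : (b : ℕ) = b₁ <;>
      simp_all [sum_delta, mul_ite] <;> split_ifs <;> simp_all [sum_delta]
  rw [Finset.sum_congr rfl fun a _ => Finset.sum_congr rfl fun b _ => key a b]
  have key2 : ∀ a : Fin d₁,
      (∑ b : Fin d₂, if (a : ℕ) = a₀ then (if (b : ℕ) = b₀ then (if (a : ℕ) = a₁ then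
          (if (b : ℕ) = b₁ then
          (if h : c₀ < d₃ then (if h' : c₁ < d₃ then E ⟨c₀, h⟩ ⟨c₁, h'⟩ else 0) else 0)
          else 0) else 0) else 0) else 0)
      = if (a : ℕ) = a₀ then (if hb : b₀ < d₂ then (if (a : ℕ) = a₁ then (if b₀ = b₁ then
          (if h : c₀ < d₃ then (if h' : c₁ < d₃ then E ⟨c₀, h⟩ ⟨c₁, h'⟩ else 0) else 0)
          else 0) else 0) else 0) else 0 := by
    intro a
    by_cases h1 : (a : ℕ) = a₀ <;> by_cases h3 : (a : ℕ) = a₁ <;>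
      simp_all [sum_delta]
  rw [Finset.sum_congr rfl fun a _ => key2 a, sum_delta]
  unfold ext3
  by_cases H1 : a₀ < d₁
  · simp only [dif_pos H1]
    by_cases H2 : b₀ < d₂
    · simp only [dif_pos H2]
      by_cases H3 : a₀ = a₁
      · by_cases H4 : b₀ = b₁
        · simp only [H3, H4]
          by_cases H5 : c₀ < d₃
          · by_cases H6 : c₁ < d₃
            · simp [H3, H4, H5, H6, H1, H2, show a₁ < d₁ from H3 ▸ H1,
                show b₁ < d₂ from H4 ▸ H2]
            · simp [H3, H4, H5, H6, H1, H2, show a₁ < d₁ from H3 ▸ H1,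
                show b₁ < d₂ from H4 ▸ H2, fun h : c₀ < d₃ ∧ c₁ < d₃ => H6 h.2]
          · simp [H3, H4, H5, H1, H2, show a₁ < d₁ from H3 ▸ H1,
              show b₁ < d₂ from H4 ▸ H2, fun h : c₀ < d₃ ∧ c₁ < d₃ => H5 h.1]
        · simp [H3, H4]
      · simp [H3]
    · simp [H2]
  · simp [H1]

lemma pr3_one_ket (d₁ d₂ d₃ : ℕ) (E : Matrix (Fin d₃) (Fin d₃) ℂ) (a₁ b₁ c₁ : ℕ) :
    pr3 d₁ d₂ d₃ E (fun _ _ _ => 1) (ket3 d₁ d₂ d₃ a₁ b₁ c₁)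
      = if a₁ < d₁ ∧ b₁ < d₂ then colS E c₁ else 0 := by
  unfold pr3 ket3
  have key : ∀ (a : Fin d₁) (b : Fin d₂),
      (∑ c : Fin d₃, (starRingEnd ℂ) (1:ℂ) *
        (∑ c' : Fin d₃, E c c' *
          (if (a : ℕ) = a₁ ∧ (b : ℕ) = b₁ ∧ (c' : ℕ) = c₁ then (1:ℂ) else 0)))
      = if (b : ℕ) = b₁ then (if (a : ℕ) = a₁ then colS E c₁ else 0) else 0 := by
    intro a b
    by_cases h3 : (a : ℕ) = a₁ <;> by_cases h4 : (b : ℕ) = b₁ <;>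
      simp_all [colS, ext3, sum_delta, mul_ite]
  rw [Finset.sum_congr rfl fun a _ => Finset.sum_congr rfl fun b _ => key a b]
  rw [Finset.sum_congr rfl fun a _ => sum_delta b₁ _]
  by_cases H2 : b₁ < d₂
  · simp only [dif_pos H2]
    rw [sum_delta]
    by_cases H1 : a₁ < d₁ <;> simp [H1, H2]
  · simp [dif_neg H2, H2]

set_option maxHeartbeats 1600000 in
theorem charlie_trivial_T (d₁ d₂ d₃ : ℕ) (h1 : 3 ≤ d₁) (h2 : d₁ ≤ d₂) (h3 : d₂ ≤ d₃)
    (E : Matrix (Fin d₃) (Fin d₃) ℂ)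
    (hE : ∀ i j : ℕ, i ≤ d₃ → j ≤ d₃ → i ≠ j →
      ∑ a : Fin d₁, ∑ b : Fin d₂, ∑ c : Fin d₃,
        (starRingEnd ℂ) (stateT d₁ d₂ d₃ i a b c) *
          (∑ c' : Fin d₃, E c c' * stateT d₁ d₂ d₃ j a b c') = 0) :
    ∃ k : ℂ, E = k • (1 : Matrix (Fin d₃) (Fin d₃) ℂ) := by
  have hP : ∀ i j : ℕ, i ≤ d₃ → j ≤ d₃ → i ≠ j →
      pr3 d₁ d₂ d₃ E (stateT d₁ d₂ d₃ i) (stateT d₁ d₂ d₃ j) = 0 := hE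
  have hω0 : Complex.exp (2 * Real.pi * Complex.I / 3) ≠ 0 := Complex.exp_ne_zero _
  have hω2 : (Complex.exp (2 * Real.pi * Complex.I / 3)) ^ 2 ≠ 0 := pow_ne_zero _ hω0
  have hωcube : (Complex.exp (2 * Real.pi * Complex.I / 3)) ^ 3 = 1 := by
    rw [← Complex.exp_nat_mul]
    rw [show ((3:ℕ):ℂ) * (2 * Real.pi * Complex.I / 3) = 2 * Real.pi * Complex.I by
      push_cast; ring]
    exact Complex.exp_two_pi_mul_I
  have hω1 : Complex.exp (2 * Real.pi * Complex.I / 3) ≠ 1 := by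
    intro h
    rw [Complex.exp_eq_one_iff] at h
    obtain ⟨n, hn⟩ := h
    have hπ : (2 * (Real.pi : ℂ) * Complex.I) ≠ 0 := by
      simp [Real.pi_ne_zero, Complex.I_ne_zero]
    have h3' : (2 * (Real.pi : ℂ) * Complex.I) * (1/3) = (2 * (Real.pi : ℂ) * Complex.I) * n := by
      linear_combination hn
    have h4 : (1/3 : ℂ) = n := mul_left_cancel₀ hπ h3'
    have h5 : (1:ℂ) = 3 * n := by linear_combination 3 * h4
    have h6 : (1:ℤ) = 3 * n := by exact_mod_cast h5
    omega
  have hsum3 : 1 + Complex.exp (2 * Real.pi * Complex.I / 3)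
      + (Complex.exp (2 * Real.pi * Complex.I / 3)) ^ 2 = 0 := by
    have hne : Complex.exp (2 * Real.pi * Complex.I / 3) - 1 ≠ 0 := sub_ne_zero.mpr hω1
    have h0 : (Complex.exp (2 * Real.pi * Complex.I / 3) - 1) *
        (1 + Complex.exp (2 * Real.pi * Complex.I / 3)
          + (Complex.exp (2 * Real.pi * Complex.I / 3)) ^ 2) = 0 := by
      linear_combination hωcube
    exact (mul_eq_zero.mp h0).resolve_left hne
  -- all off-diagonal entries with one index below d₂ vanish
  have offLow : ∀ m n : ℕ, m < d₃ → n < d₃ → m ≠ n → (m < d₂ ∨ n < d₂) → ext3 E m n = 0 := by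
    intro m n hm hn hmn hlow
    have key := hP m n (by omega) (by omega) hmn
    unfold stateT at key
    split_ifs at key <;>
      first
        | omega
        | (simp only [pr3_add_left, pr3_add_right, pr3_sub_left, pr3_sub_right,
             pr3_smul_left, pr3_smul_right, pr3_ket_ket,
             true_and, and_true, false_and, and_false, ite_true, ite_false,
             (show ¬((1:ℕ) = 0) by omega), (show ¬((0:ℕ) = 1) by omega),
             (show ¬((2:ℕ) = 0) by omega), (show ¬((0:ℕ) = 2) by omega),
             (show ¬((2:ℕ) = 1) by omega), (show ¬((1:ℕ) = 2) by omega)] at key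
           split_ifs at key <;>
             first
               | omega
               | simpa [hω0, hω2, sub_eq_zero, neg_eq_zero] using key
               | (rw [(by omega : m = 0)]
                  simpa [hω0, hω2, sub_eq_zero, neg_eq_zero] using key)
               | (rw [(by omega : n = 0)]
                  simpa [hω0, hω2, sub_eq_zero, neg_eq_zero] using key))
  -- all off-diagonal entries vanish
  have offAll : ∀ m n : ℕ, m < d₃ → n < d₃ → m ≠ n → ext3 E m n = 0 := by
    intro m
    induction m using Nat.strong_induction_on with
    | _ m ih =>
      intro n hm hn hmn
      by_cases hC : d₂ ≤ m ∧ d₂ ≤ n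
      · have key := hP m n (by omega) (by omega) hmn
        unfold stateT at key
        split_ifs at key <;> try omega
        simp only [pr3_sub_left, pr3_sub_right, pr3_ket_ket,
          true_and, and_true, false_and, and_false, ite_true, ite_false,
             (show ¬((1:ℕ) = 0) by omega), (show ¬((0:ℕ) = 1) by omega),
             (show ¬((2:ℕ) = 0) by omega), (show ¬((0:ℕ) = 2) by omega),
             (show ¬((2:ℕ) = 1) by omega), (show ¬((1:ℕ) = 2) by omega)] at key
        split_ifs at key <;> try omega
        have hrec : ext3 E (m - 1) (n - 1) = 0 :=
          ih (m - 1) (by omega) (n - 1) (by omega) (by omega) (by omega)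
        simp only [hrec] at key
        simpa using key
      · exact offLow m n hm hn hmn (by omega)
  -- all column sums are equal
  have colAll : ∀ n : ℕ, n < d₃ → colS E n = colS E 0 := by
    intro n
    induction n using Nat.strong_induction_on with
    | _ n ih =>
      intro hn
      rcases (by omega : n = 0 ∨ (n ≠ 0 ∧ n < d₁) ∨ (d₁ ≤ n ∧ n < d₂) ∨ (d₂ ≤ n ∧ n < d₃))
          with h0 | hA | hB | hC
      · rw [h0]
      · have key := hP d₃ n (le_refl _) (by omega) (by omega)
        unfold stateT at key
        split_ifs at key <;> try omega
        simp only [pr3_add_right, pr3_smul_right, pr3_one_ket,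
          true_and, and_true, false_and, and_false, ite_true, ite_false,
             (show ¬((1:ℕ) = 0) by omega), (show ¬((0:ℕ) = 1) by omega),
             (show ¬((2:ℕ) = 0) by omega), (show ¬((0:ℕ) = 2) by omega),
             (show ¬((2:ℕ) = 1) by omega), (show ¬((1:ℕ) = 2) by omega)] at key
        split_ifs at key <;> try omega
        have h2' : (Complex.exp (2 * Real.pi * Complex.I / 3)) ^ 2
            * (colS E n - colS E 0) = 0 := by
          linear_combination key - colS E 0 * hsum3
        have h3' := (mul_eq_zero.mp h2').resolve_left hω2
        linear_combination h3'
      · have key := hP d₃ n (le_refl _) (by omega) (by omega)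
        unfold stateT at key
        split_ifs at key <;> try omega
        simp only [pr3_sub_right, pr3_one_ket,
          true_and, and_true, false_and, and_false, ite_true, ite_false,
             (show ¬((1:ℕ) = 0) by omega), (show ¬((0:ℕ) = 1) by omega),
             (show ¬((2:ℕ) = 0) by omega), (show ¬((0:ℕ) = 2) by omega),
             (show ¬((2:ℕ) = 1) by omega), (show ¬((1:ℕ) = 2) by omega)] at key
        split_ifs at key <;> try omega
        linear_combination -key
      · have key := hP d₃ n (le_refl _) (by omega) (by omega)
        unfold stateT at key
        split_ifs at key <;> try omega
        simp only [pr3_sub_right, pr3_one_ket,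
          true_and, and_true, false_and, and_false, ite_true, ite_false,
             (show ¬((1:ℕ) = 0) by omega), (show ¬((0:ℕ) = 1) by omega),
             (show ¬((2:ℕ) = 0) by omega), (show ¬((0:ℕ) = 2) by omega),
             (show ¬((2:ℕ) = 1) by omega), (show ¬((1:ℕ) = 2) by omega)] at key
        split_ifs at key <;> try omega
        have hrec := ih (n - 1) (by omega) (by omega)
        linear_combination key + hrec
  -- diagonal entries equal the column sums
  have diag : ∀ n : ℕ, ∀ hn : n < d₃, ext3 E n n = colS E n := by
    intro n hn
    symm
    apply Finset.sum_eq_single_of_mem (⟨n, hn⟩ : Fin d₃) (Finset.mem_univ _)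
    intro b _ hb
    exact offAll (b : ℕ) n b.isLt hn (fun h => hb (Fin.ext h))
  refine ⟨colS E 0, ?_⟩
  ext i j
  simp only [Matrix.smul_apply, Matrix.one_apply, smul_eq_mul]
  by_cases hij : i = j
  · subst hij
    have hfold : ext3 E (i : ℕ) (i : ℕ) = E i i := by
      simp [ext3, i.isLt]
    rw [← hfold, diag _ i.isLt, colAll _ i.isLt]
    simp
  · have hne : (i : ℕ) ≠ (j : ℕ) := fun h => hij (Fin.ext h)
    have hoff := offAll (i : ℕ) (j : ℕ) i.isLt j.isLt hne
    have hfold : ext3 E (i : ℕ) (j : ℕ) = E i j := by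
      simp [ext3, i.isLt, j.isLt]
    rw [hfold] at hoff
    simp [hij, hoff]
end

section
/- Let 3 ≤ d₁ ≤ d₂ ≤ d₃ and ω = e^{2πi/3}. With S the set of d₃+1 tripartite states of Eq. (7) (as in the previous statement), if a d₂×d₂ complex matrix E satisfies ⟨ψ| (I ⊗ E ⊗ I) |φ⟩ = 0 for all distinct ψ, φ ∈ S, then E = c·I for some c ∈ ℂ. -/
open Finset

/-! ### Auxiliary machinery -/

/-- The third root of unity used in the states. -/
noncomputable def ω3 : ℂ := Complex.exp (2 * Real.pi * Complex.I / 3)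

lemma ω3_ne_zero : ω3 ≠ 0 := Complex.exp_ne_zero _

lemma ω3_cube : ω3 ^ 3 = 1 := by
  unfold ω3
  rw [← Complex.exp_nat_mul]
  have h : (3 : ℕ) * (2 * (Real.pi : ℂ) * Complex.I / 3) = 2 * (Real.pi : ℂ) * Complex.I := by
    push_cast; ring
  rw [h, Complex.exp_two_pi_mul_I]

lemma ω3_ne_one : ω3 ≠ 1 := by
  intro h
  have him : ω3.im = Real.sin (2 * Real.pi / 3) := by
    unfold ω3
    have h' : (2 * (Real.pi : ℂ) * Complex.I / 3) = ((2 * Real.pi / 3 : ℝ) : ℂ) * Complex.I := by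
      push_cast; ring
    rw [h', Complex.exp_ofReal_mul_I_im]
  have hpos : 0 < Real.sin (2 * Real.pi / 3) :=
    Real.sin_pos_of_pos_of_lt_pi (by positivity) (by nlinarith [Real.pi_pos])
  rw [h] at him
  simp at him
  linarith [him ▸ hpos]

lemma ω3_sum : 1 + ω3 + ω3 ^ 2 = 0 := by
  have h3 := ω3_cube
  have h1 : ω3 - 1 ≠ 0 := sub_ne_zero.mpr ω3_ne_one
  have h : (ω3 - 1) * (1 + ω3 + ω3 ^ 2) = 0 := by linear_combination h3
  rcases mul_eq_zero.mp h with h | h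
  · exact absurd h h1
  · exact h

/-- The sesquilinear form `⟨ψ|(I ⊗ E ⊗ I)|φ⟩`. -/
noncomputable def Bf (d₁ d₂ d₃ : ℕ) (E : Matrix (Fin d₂) (Fin d₂) ℂ)
    (ψ φ : Fin d₁ → Fin d₂ → Fin d₃ → ℂ) : ℂ :=
  ∑ a : Fin d₁, ∑ b : Fin d₂, ∑ c : Fin d₃,
    (starRingEnd ℂ) (ψ a b c) * (∑ b' : Fin d₂, E b b' * φ a b' c)

section Aux

variable {d₁ d₂ d₃ : ℕ} {E : Matrix (Fin d₂) (Fin d₂) ℂ}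

lemma conj_ket3 (a b c : ℕ) (x : Fin d₁) (y : Fin d₂) (z : Fin d₃) :
    (starRingEnd ℂ) (ket3 d₁ d₂ d₃ a b c x y z) = ket3 d₁ d₂ d₃ a b c x y z := by
  unfold ket3; split <;> simp

lemma B_add_left (ψ₁ ψ₂ φ : Fin d₁ → Fin d₂ → Fin d₃ → ℂ) :
    Bf d₁ d₂ d₃ E (ψ₁ + ψ₂) φ = Bf d₁ d₂ d₃ E ψ₁ φ + Bf d₁ d₂ d₃ E ψ₂ φ := by
  simp [Bf, add_mul, Finset.sum_add_distrib]

lemma B_sub_left (ψ₁ ψ₂ φ : Fin d₁ → Fin d₂ → Fin d₃ → ℂ) :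
    Bf d₁ d₂ d₃ E (ψ₁ - ψ₂) φ = Bf d₁ d₂ d₃ E ψ₁ φ - Bf d₁ d₂ d₃ E ψ₂ φ := by
  simp [Bf, sub_mul, Finset.sum_sub_distrib]

lemma B_smul_left (r : ℂ) (ψ φ : Fin d₁ → Fin d₂ → Fin d₃ → ℂ) :
    Bf d₁ d₂ d₃ E (r • ψ) φ = (starRingEnd ℂ) r * Bf d₁ d₂ d₃ E ψ φ := by
  simp [Bf, Finset.mul_sum, mul_assoc]

lemma B_add_right (ψ φ₁ φ₂ : Fin d₁ → Fin d₂ → Fin d₃ → ℂ) :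
    Bf d₁ d₂ d₃ E ψ (φ₁ + φ₂) = Bf d₁ d₂ d₃ E ψ φ₁ + Bf d₁ d₂ d₃ E ψ φ₂ := by
  simp [Bf, mul_add, Finset.sum_add_distrib]

lemma B_sub_right (ψ φ₁ φ₂ : Fin d₁ → Fin d₂ → Fin d₃ → ℂ) :
    Bf d₁ d₂ d₃ E ψ (φ₁ - φ₂) = Bf d₁ d₂ d₃ E ψ φ₁ - Bf d₁ d₂ d₃ E ψ φ₂ := by
  simp [Bf, mul_sub, Finset.sum_sub_distrib]

lemma B_smul_right (r : ℂ) (ψ φ : Fin d₁ → Fin d₂ → Fin d₃ → ℂ) :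
    Bf d₁ d₂ d₃ E ψ (r • φ) = r * Bf d₁ d₂ d₃ E ψ φ := by
  simp only [Bf, Pi.smul_apply, smul_eq_mul, Finset.mul_sum]
  exact Finset.sum_congr rfl fun a _ => Finset.sum_congr rfl fun b _ =>
    Finset.sum_congr rfl fun c _ => Finset.sum_congr rfl fun b' _ => by ring

lemma ket3_sum (a b c : ℕ) (ha : a < d₁) (hb : b < d₂) (hc : c < d₃)
    (f : Fin d₁ → Fin d₂ → Fin d₃ → ℂ) :
    (∑ x : Fin d₁, ∑ y : Fin d₂, ∑ z : Fin d₃, ket3 d₁ d₂ d₃ a b c x y z * f x y z)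
      = f ⟨a, ha⟩ ⟨b, hb⟩ ⟨c, hc⟩ := by
  have h1 : ∀ x : Fin d₁, x ≠ ⟨a, ha⟩ →
      (∑ y : Fin d₂, ∑ z : Fin d₃, ket3 d₁ d₂ d₃ a b c x y z * f x y z) = 0 := by
    intro x hx
    have hx' : (x : ℕ) ≠ a := fun h => hx (Fin.ext h)
    exact Finset.sum_eq_zero fun y _ => Finset.sum_eq_zero fun z _ => by simp [ket3, hx']
  rw [Fintype.sum_eq_single _ h1]
  have h2 : ∀ y : Fin d₂, y ≠ ⟨b, hb⟩ →
      (∑ z : Fin d₃, ket3 d₁ d₂ d₃ a b c ⟨a, ha⟩ y z * f ⟨a, ha⟩ y z) = 0 := by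
    intro y hy
    have hy' : (y : ℕ) ≠ b := fun h => hy (Fin.ext h)
    exact Finset.sum_eq_zero fun z _ => by simp [ket3, hy']
  rw [Fintype.sum_eq_single _ h2]
  have h3 : ∀ z : Fin d₃, z ≠ ⟨c, hc⟩ →
      ket3 d₁ d₂ d₃ a b c ⟨a, ha⟩ ⟨b, hb⟩ z * f ⟨a, ha⟩ ⟨b, hb⟩ z = 0 := by
    intro z hz
    have hz' : (z : ℕ) ≠ c := fun h => hz (Fin.ext h)
    simp [ket3, hz']
  rw [Fintype.sum_eq_single _ h3]
  simp [ket3]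

lemma Bkk_ne (a b c a' b' c' : ℕ) (h : a ≠ a' ∨ c ≠ c') :
    Bf d₁ d₂ d₃ E (ket3 d₁ d₂ d₃ a b c) (ket3 d₁ d₂ d₃ a' b' c') = 0 := by
  unfold Bf
  refine Finset.sum_eq_zero fun x _ => Finset.sum_eq_zero fun y _ =>
    Finset.sum_eq_zero fun z _ => ?_
  by_cases hx : (x : ℕ) = a ∧ (y : ℕ) = b ∧ (z : ℕ) = c
  · have h2 : ∀ y' : Fin d₂, ket3 d₁ d₂ d₃ a' b' c' x y' z = 0 := by
      intro y'
      unfold ket3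
      rw [if_neg]
      obtain ⟨hx1, -, hx3⟩ := hx
      rcases h with h | h <;> omega
    simp [h2]
  · unfold ket3
    rw [if_neg hx]
    simp

lemma Bkk_eq (a b c b' : ℕ) (ha : a < d₁) (hb : b < d₂) (hc : c < d₃) (hb' : b' < d₂) :
    Bf d₁ d₂ d₃ E (ket3 d₁ d₂ d₃ a b c) (ket3 d₁ d₂ d₃ a b' c) = E ⟨b, hb⟩ ⟨b', hb'⟩ := by
  unfold Bf
  simp only [conj_ket3]
  refine (ket3_sum a b c ha hb hc
    (fun x y z => ∑ b'' : Fin d₂, E y b'' * ket3 d₁ d₂ d₃ a b' c x b'' z)).trans ?_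
  have h4 : ∀ y' : Fin d₂, y' ≠ ⟨b', hb'⟩ →
      E ⟨b, hb⟩ y' * ket3 d₁ d₂ d₃ a b' c ⟨a, ha⟩ y' ⟨c, hc⟩ = 0 := by
    intro y' hy
    have hy' : (y' : ℕ) ≠ b' := fun h => hy (Fin.ext h)
    simp [ket3, hy']
  rw [Fintype.sum_eq_single _ h4]
  simp [ket3]

lemma Bks (a b c : ℕ) (ha : a < d₁) (hb : b < d₂) (hc : c < d₃) :
    Bf d₁ d₂ d₃ E (ket3 d₁ d₂ d₃ a b c) (fun _ _ _ => (1 : ℂ))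
      = ∑ y' : Fin d₂, E ⟨b, hb⟩ y' := by
  unfold Bf
  simp only [conj_ket3]
  refine (ket3_sum a b c ha hb hc
    (fun x y z => ∑ b'' : Fin d₂, E y b'' * (1 : ℂ))).trans ?_
  simp

lemma stateT_c0 : stateT d₁ d₂ d₃ 0 = ket3 d₁ d₂ d₃ 0 0 0 - ket3 d₁ d₂ d₃ 1 1 1 := by
  unfold stateT; rw [if_pos rfl]

lemma stateT_c1 (i : ℕ) (h0 : i ≠ 0) (hi : i < d₁) :
    stateT d₁ d₂ d₃ i = ket3 d₁ d₂ d₃ i 0 0 + ω3 • ket3 d₁ d₂ d₃ 0 i 0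
      + ω3 ^ 2 • ket3 d₁ d₂ d₃ 0 0 i := by
  unfold stateT ω3; rw [if_neg h0, if_pos hi]

lemma stateT_c2 (i : ℕ) (h0 : i ≠ 0) (hi : ¬ i < d₁) (hi' : i < d₂) :
    stateT d₁ d₂ d₃ i = ket3 d₁ d₂ d₃ 0 i 0 - ket3 d₁ d₂ d₃ 0 0 i := by
  unfold stateT; rw [if_neg h0, if_neg hi, if_pos hi']

lemma stateT_c4 (i : ℕ) (h0 : i ≠ 0) (hi : ¬ i < d₁) (hi' : ¬ i < d₂) (hi'' : ¬ i < d₃) :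
    stateT d₁ d₂ d₃ i = fun _ _ _ => (1 : ℂ) := by
  unfold stateT; rw [if_neg h0, if_neg hi, if_neg hi', if_neg hi'']

end Aux

theorem bob_trivial_T (d₁ d₂ d₃ : ℕ) (h1 : 3 ≤ d₁) (h2 : d₁ ≤ d₂) (h3 : d₂ ≤ d₃)
    (E : Matrix (Fin d₂) (Fin d₂) ℂ)
    (hE : ∀ i j : ℕ, i ≤ d₃ → j ≤ d₃ → i ≠ j →
      ∑ a : Fin d₁, ∑ b : Fin d₂, ∑ c : Fin d₃,
        (starRingEnd ℂ) (stateT d₁ d₂ d₃ i a b c) *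
          (∑ b' : Fin d₂, E b b' * stateT d₁ d₂ d₃ j a b' c) = 0) :
    ∃ k : ℂ, E = k • (1 : Matrix (Fin d₂) (Fin d₂) ℂ) := by
  have h0d : 0 < d₂ := by omega
  have key : ∀ i j : ℕ, i ≤ d₃ → j ≤ d₃ → i ≠ j →
      Bf d₁ d₂ d₃ E (stateT d₁ d₂ d₃ i) (stateT d₁ d₂ d₃ j) = 0 := hE
  have hωc : (starRingEnd ℂ) ω3 ≠ 0 := by
    simp only [ne_eq, map_eq_zero]
    exact ω3_ne_zero
  have trich : ∀ r : ℕ, r < d₂ → r = 0 ∨ (r ≠ 0 ∧ r < d₁) ∨ (d₁ ≤ r ∧ r < d₂) := by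
    intro r hr; omega
  -- off-diagonal entries vanish
  have hoff : ∀ p q : ℕ, ∀ hp : p < d₂, ∀ hq : q < d₂, p ≠ q → E ⟨p, hp⟩ ⟨q, hq⟩ = 0 := by
    intro p q hp hq hpq
    rcases trich p hp with hp' | ⟨hpa, hpb⟩ | ⟨hpa, hpb⟩ <;>
      rcases trich q hq with hq' | ⟨hqa, hqb⟩ | ⟨hqa, hqb⟩
    · omega
    · -- p = 0, 1 ≤ q < d₁
      subst hp'
      have h := key 0 q (by omega) (by omega) (by omega)
      rw [stateT_c0, stateT_c1 q hqa hqb] at h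
      simp (disch := omega) only [B_sub_left, B_add_right, B_smul_right,
        Bkk_ne, Bkk_eq, mul_zero, zero_mul, add_zero, zero_add, sub_zero, zero_sub,
        neg_eq_zero] at h
      simpa [mul_eq_zero, ω3_ne_zero, pow_eq_zero_iff] using h
    · -- p = 0, d₁ ≤ q
      subst hp'
      have h := key 0 q (by omega) (by omega) (by omega)
      rw [stateT_c0, stateT_c2 q (by omega) (by omega) hqb] at h
      simp (disch := omega) only [B_sub_left, B_sub_right,
        Bkk_ne, Bkk_eq, mul_zero, zero_mul, add_zero, zero_add, sub_zero, zero_sub,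
        neg_eq_zero] at h
      exact h
    · -- 1 ≤ p < d₁, q = 0
      subst hq'
      have h := key p 0 (by omega) (by omega) (by omega)
      rw [stateT_c0, stateT_c1 p hpa hpb] at h
      simp (disch := omega) only [B_add_left, B_smul_left, B_sub_right,
        Bkk_ne, Bkk_eq, map_pow, mul_zero, zero_mul, add_zero, zero_add, sub_zero,
        zero_sub, neg_eq_zero] at h
      simpa [mul_eq_zero, hωc, pow_eq_zero_iff] using h
    · -- both in [1, d₁)
      have h := key p q (by omega) (by omega) hpq
      rw [stateT_c1 p hpa hpb, stateT_c1 q hqa hqb] at h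
      simp (disch := omega) only [B_add_left, B_smul_left, B_add_right, B_smul_right,
        Bkk_ne, Bkk_eq, map_pow, mul_zero, zero_mul, add_zero, zero_add, sub_zero,
        zero_sub, neg_eq_zero] at h
      simpa [mul_eq_zero, hωc, ω3_ne_zero, pow_eq_zero_iff] using h
    · -- p in [1, d₁), q in [d₁, d₂)
      have h := key p q (by omega) (by omega) hpq
      rw [stateT_c1 p hpa hpb, stateT_c2 q (by omega) (by omega) hqb] at h
      simp (disch := omega) only [B_add_left, B_smul_left, B_sub_right,
        Bkk_ne, Bkk_eq, map_pow, mul_zero, zero_mul, add_zero, zero_add, sub_zero,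
        zero_sub, neg_eq_zero] at h
      simpa [mul_eq_zero, hωc, pow_eq_zero_iff] using h
    · -- p in [d₁, d₂), q = 0
      subst hq'
      have h := key p 0 (by omega) (by omega) (by omega)
      rw [stateT_c0, stateT_c2 p (by omega) (by omega) hpb] at h
      simp (disch := omega) only [B_sub_left, B_sub_right,
        Bkk_ne, Bkk_eq, mul_zero, zero_mul, add_zero, zero_add, sub_zero, zero_sub,
        neg_eq_zero] at h
      exact h
    · -- p in [d₁, d₂), q in [1, d₁)
      have h := key p q (by omega) (by omega) hpq
      rw [stateT_c2 p (by omega) (by omega) hpb, stateT_c1 q hqa hqb] at h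
      simp (disch := omega) only [B_sub_left, B_add_right, B_smul_right,
        Bkk_ne, Bkk_eq, mul_zero, zero_mul, add_zero, zero_add, sub_zero, zero_sub,
        neg_eq_zero] at h
      simpa [mul_eq_zero, ω3_ne_zero, pow_eq_zero_iff] using h
    · -- both in [d₁, d₂)
      have h := key p q (by omega) (by omega) hpq
      rw [stateT_c2 p (by omega) (by omega) hpb, stateT_c2 q (by omega) (by omega) hqb] at h
      simp (disch := omega) only [B_sub_left, B_sub_right,
        Bkk_ne, Bkk_eq, mul_zero, zero_mul, add_zero, zero_add, sub_zero, zero_sub,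
        neg_eq_zero] at h
      exact h
  -- row sums are the diagonal entries
  have hdiag0 : ∀ p : ℕ, ∀ hp : p < d₂, (∑ y' : Fin d₂, E ⟨p, hp⟩ y') = E ⟨p, hp⟩ ⟨p, hp⟩ := by
    intro p hp
    apply Fintype.sum_eq_single
    intro y' hy'
    have hne : p ≠ (y' : ℕ) := by
      intro hc
      exact hy' (Fin.ext hc.symm)
    have := hoff p y'.val hp y'.isLt hne
    simpa using this
  -- diagonal entries are all equal
  have hdiag : ∀ p : ℕ, ∀ hp : p < d₂, E ⟨p, hp⟩ ⟨p, hp⟩ = E ⟨0, h0d⟩ ⟨0, h0d⟩ := by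
    intro p hp
    rcases trich p hp with hp' | ⟨hpa, hpb⟩ | ⟨hpa, hpb⟩
    · subst hp'; rfl
    · have h := key p d₃ (by omega) le_rfl (by omega)
      rw [stateT_c1 p hpa hpb, stateT_c4 d₃ (by omega) (by omega) (by omega) (by omega)] at h
      simp (disch := omega) only [B_add_left, B_smul_left, Bks, map_pow] at h
      simp only [hdiag0] at h
      have hs : 1 + (starRingEnd ℂ) ω3 + ((starRingEnd ℂ) ω3) ^ 2 = 0 := by
        have := congrArg (starRingEnd ℂ) ω3_sum
        simpa using this
      have hz : (starRingEnd ℂ) ω3 * (E ⟨p, hp⟩ ⟨p, hp⟩ - E ⟨0, h0d⟩ ⟨0, h0d⟩) = 0 := by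
        linear_combination h - E ⟨0, h0d⟩ ⟨0, h0d⟩ * hs
      exact sub_eq_zero.mp ((mul_eq_zero.mp hz).resolve_left hωc)
    · have h := key p d₃ (by omega) le_rfl (by omega)
      rw [stateT_c2 p (by omega) (by omega) hpb,
        stateT_c4 d₃ (by omega) (by omega) (by omega) (by omega)] at h
      simp (disch := omega) only [B_sub_left, Bks] at h
      simp only [hdiag0] at h
      exact sub_eq_zero.mp h
  refine ⟨E ⟨0, h0d⟩ ⟨0, h0d⟩, ?_⟩
  ext b b'
  rcases eq_or_ne b b' with rfl | hbb
  · have := hdiag b.val b.isLt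
    simpa [Matrix.one_apply_eq] using this
  · have hne : (b : ℕ) ≠ (b' : ℕ) := by
      intro hc; exact hbb (Fin.ext hc)
    have := hoff b.val b'.val b.isLt b'.isLt hne
    simp [Matrix.one_apply_ne hbb]
    simpa using this
end
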